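/- For every real x with 0 < x < 1 and integer N ≥ 2, ∑_{L=1}^{N} binom(N,L) (Lx/N)^{L-1}(1-Lx/N)^{N-L-1} = (N-(N-1)x)/(1-x) when the substitution α = x is made; i.e., ∑_{L=1}^{N} binom(N,L)(Lα/N)^{L-1}(1-Lα/N)^{N-L-1} = (N-(N-1)α)/(1-α). -/

import Mathlib

open Finset


lemma fd : ∀ n : ℕ, 1 ≤ n → ∀ j : ℕ, j < n →
    ∑ k ∈ range (n+1), (-1:ℝ)^k * (n.choose k : ℝ) * (k:ℝ)^j = 0 := by
  intro n
  induction n with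
  | zero => omega
  | succ n ih =>
    intro _ j hj
    match j with
    | 0 =>
      have h := add_pow (-1 : ℝ) 1 (n+1)
      simp only [one_pow, mul_one, neg_add_cancel] at h
      rw [zero_pow (by omega)] at h
      simp only [pow_zero, mul_one]
      rw [← h]
    | i + 1 =>
      have hn : 1 ≤ n := by omega
      rw [Finset.sum_range_succ']
      simp only [Nat.cast_zero, zero_pow (by omega : i + 1 ≠ 0), mul_zero, add_zero]
      have key : ∀ m ∈ range (n+1), (-1:ℝ)^(m+1) * ((n+1).choose (m+1) : ℝ) * ((m+1:ℕ):ℝ)^(i+1)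
          = -((n+1 : ℝ) * ∑ t ∈ range (i+1), (i.choose t : ℝ) * ((-1:ℝ)^m * (n.choose m : ℝ) * (m:ℝ)^t)) := by
        intro m _
        have hc : ((n+1).choose (m+1) : ℝ) * ((m:ℝ)+1) = ((n:ℝ)+1) * (n.choose m : ℝ) := by
          have := Nat.add_one_mul_choose_eq n m
          exact_mod_cast congrArg (fun x : ℕ => (x : ℝ)) this.symm
        have hexp : ((m:ℝ)+1)^i = ∑ t ∈ range (i+1), (m:ℝ)^t * (i.choose t : ℝ) := by
          have := add_pow (m:ℝ) 1 i
          simpa using this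
        push_cast
        rw [show (-1:ℝ)^(m+1) * (((n+1).choose (m+1) : ℝ)) * ((m:ℝ)+1)^(i+1)
            = ((-1:ℝ)^(m+1) * (((n+1).choose (m+1):ℝ) * ((m:ℝ)+1))) * ((m:ℝ)+1)^i by ring,
          hc, hexp, Finset.mul_sum, Finset.mul_sum, ← Finset.sum_neg_distrib]
        exact Finset.sum_congr rfl (fun t _ => by ring)
      rw [Finset.sum_congr rfl key, Finset.sum_neg_distrib, ← Finset.mul_sum, Finset.sum_comm]
      have hz : ∀ t ∈ range (i+1),
          ∑ m ∈ range (n+1), (i.choose t : ℝ) * ((-1:ℝ)^m * (n.choose m : ℝ) * (m:ℝ)^t) = 0 := by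
        intro t ht
        have ht' := Finset.mem_range.mp ht
        rw [← Finset.mul_sum, ih hn t (by omega), mul_zero]
      rw [Finset.sum_eq_zero hz, mul_zero, neg_zero]


lemma chooseid (n k : ℕ) (hk : k ≤ n) : (n+1) * n.choose k = (n+1).choose k * (n+1-k) := by
  have h1 := Nat.add_one_mul_choose_eq n (n-k)
  rw [Nat.choose_symm hk] at h1
  have h3 : (n+1).choose (n+1-k) = (n+1).choose k := by
    have := Nat.choose_symm (show k ≤ n+1 by omega) (n := n+1)
    rwa [show n + 1 - k = (n+1) - k from rfl] at this
  rw [show n - k + 1 = n + 1 - k by omega] at h1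
  rw [h1, h3]

lemma keyA : ∀ n : ℕ, 1 ≤ n → ∀ y : ℝ,
    ∑ k ∈ Icc 1 n, (n.choose k : ℝ) * (k:ℝ)^(k-1) * (y + ((n:ℝ) - k))^(n-k)
      = n * (y + n)^(n-1) := by
  intro n
  induction n with
  | zero => omega
  | succ n ih =>
    intro _ y
    rcases Nat.eq_zero_or_pos n with h0 | hn
    · subst h0
      norm_num
    -- main case : n ≥ 1
    set f : ℝ → ℝ := fun y =>
      ∑ k ∈ Icc 1 (n+1), (((n+1).choose k : ℝ)) * (k:ℝ)^(k-1) * (y + (((n:ℝ)+1) - k))^(n+1-k)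
      with hfdef
    set g : ℝ → ℝ := fun y => ((n:ℝ)+1) * (y + ((n:ℝ)+1))^n with hgdef
    have hf : ∀ y : ℝ, HasDerivAt f
        (∑ k ∈ Icc 1 (n+1), (((n+1).choose k : ℝ)) * (k:ℝ)^(k-1) *
          (((n+1-k : ℕ):ℝ) * (y + (((n:ℝ)+1) - k))^(n+1-k-1))) y := by
      intro y
      apply HasDerivAt.fun_sum
      intro k _
      have h1 : HasDerivAt (fun y : ℝ => (y + (((n:ℝ)+1) - k))^(n+1-k))
          (((n+1-k : ℕ):ℝ) * (y + (((n:ℝ)+1) - k))^(n+1-k-1)) y := by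
        have := ((hasDerivAt_id y).add_const (((n:ℝ)+1) - (k:ℝ))).fun_pow (n+1-k)
        simpa using this
      simpa [mul_assoc] using h1.const_mul ((((n+1).choose k : ℝ)) * (k:ℝ)^(k-1))
    have hg : ∀ y : ℝ, HasDerivAt g (((n:ℝ)+1) * ((n:ℝ) * (y + ((n:ℝ)+1))^(n-1))) y := by
      intro y
      have := ((hasDerivAt_id y).add_const ((n:ℝ)+1)).fun_pow n
      simpa [mul_assoc] using this.const_mul ((n:ℝ)+1)
    have hsum : ∀ y : ℝ,
        (∑ k ∈ Icc 1 (n+1), (((n+1).choose k : ℝ)) * (k:ℝ)^(k-1) *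
          (((n+1-k : ℕ):ℝ) * (y + (((n:ℝ)+1) - k))^(n+1-k-1)))
        = ((n:ℝ)+1) * ((n:ℝ) * (y + ((n:ℝ)+1))^(n-1)) := by
      intro y
      rw [Finset.sum_Icc_succ_top (by omega : 1 ≤ n+1)]
      have htop : (((n+1).choose (n+1) : ℝ)) * (((n+1:ℕ)):ℝ)^(n+1-1) *
          (((n+1-(n+1) : ℕ):ℝ) * (y + (((n:ℝ)+1) - ((n+1:ℕ):ℝ)))^(n+1-(n+1)-1)) = 0 := by
        simp
      rw [htop, add_zero]
      have hterm : ∀ k ∈ Icc 1 n,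
          (((n+1).choose k : ℝ)) * (k:ℝ)^(k-1) *
            (((n+1-k : ℕ):ℝ) * (y + (((n:ℝ)+1) - k))^(n+1-k-1))
          = ((n:ℝ)+1) * ((n.choose k : ℝ) * (k:ℝ)^(k-1) * ((y+1) + ((n:ℝ) - k))^(n-k)) := by
        intro k hk
        obtain ⟨hk1, hk2⟩ := Finset.mem_Icc.mp hk
        have hc : ((n:ℝ)+1) * (n.choose k : ℝ) = ((n+1).choose k : ℝ) * ((n+1-k : ℕ):ℝ) := by
          exact_mod_cast congrArg (fun x : ℕ => (x:ℝ)) (chooseid n k hk2)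
        have hexp : n+1-k-1 = n-k := by omega
        have hbase : y + (((n:ℝ)+1) - k) = (y+1) + ((n:ℝ) - k) := by ring
        rw [hexp, hbase]
        linear_combination (-((k:ℝ)^(k-1) * ((y+1) + ((n:ℝ) - k))^(n-k))) * hc
      rw [Finset.sum_congr rfl hterm, ← Finset.mul_sum, ih hn (y+1)]
      rw [show y + 1 + (n:ℝ) = y + ((n:ℝ)+1) by ring]
    have hF : ∀ y : ℝ, HasDerivAt (fun y => f y - g y) 0 y := by
      intro y
      have := (hf y).sub (hg y)
      rwa [hsum y, sub_self] at this
    have hconst := is_const_of_deriv_eq_zero (f := fun y => f y - g y)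
      (fun y => (hF y).differentiableAt) (fun y => (hF y).deriv) y (-((n:ℝ)+1))
    -- anchor computation
    have hanchor : f (-((n:ℝ)+1)) = 0 := by
      have h0 := fd (n+1) (by omega) n (by omega)
      rw [Finset.sum_range_succ'] at h0
      simp only [Nat.cast_zero, zero_pow (by omega : n ≠ 0), mul_zero, add_zero] at h0
      rw [hfdef]
      simp only
      rw [show Icc 1 (n+1) = Ico 1 (n+2) from (Finset.Ico_add_one_right_eq_Icc 1 (n+1)).symm,
        Finset.sum_Ico_eq_sum_range, show n + 2 - 1 = n + 1 from rfl]
      have hterm : ∀ i ∈ range (n+1),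
          (((n+1).choose (1+i) : ℝ)) * ((1+i:ℕ):ℝ)^(1+i-1) *
            ((-((n:ℝ)+1)) + (((n:ℝ)+1) - ((1+i:ℕ):ℝ)))^(n+1-(1+i))
          = (-1:ℝ)^(n+1) * ((-1:ℝ)^(i+1) * (((n+1).choose (i+1) : ℝ)) * ((i+1:ℕ):ℝ)^n) := by
        intro i hi
        have hi' := Finset.mem_range.mp hi
        have hb : (-((n:ℝ)+1)) + (((n:ℝ)+1) - ((1+i:ℕ):ℝ)) = -(((1+i:ℕ):ℝ)) := by
          push_cast; ring
        rw [hb, neg_pow]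
        have he1 : 1+i-1 = i := by omega
        rw [he1]
        have he2 : ((i+1:ℕ):ℝ)^i * ((i+1:ℕ):ℝ)^(n+1-(i+1)) = ((i+1:ℕ):ℝ)^n := by
          rw [← pow_add]; congr 1; omega
        have he3 : (-1:ℝ)^(n+1-(i+1)) = (-1:ℝ)^(n+1) * (-1:ℝ)^(i+1) := by
          rw [← pow_add, show n+1+(i+1) = (n+1-(i+1)) + 2*(i+1) by omega, pow_add, pow_mul]
          norm_num
        rw [show (1:ℕ)+i = i+1 by omega, show n+1-(i+1) = n+1-(i+1) from rfl]
        rw [he3]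
        calc (((n+1).choose (i+1) : ℝ)) * ((i+1:ℕ):ℝ)^i *
              ((-1:ℝ)^(n+1) * (-1:ℝ)^(i+1) * ((i+1:ℕ):ℝ)^(n+1-(i+1)))
            = (-1:ℝ)^(n+1) * (-1:ℝ)^(i+1) * (((n+1).choose (i+1) : ℝ)) *
              (((i+1:ℕ):ℝ)^i * ((i+1:ℕ):ℝ)^(n+1-(i+1))) := by ring
          _ = (-1:ℝ)^(n+1) * (-1:ℝ)^(i+1) * (((n+1).choose (i+1) : ℝ)) * ((i+1:ℕ):ℝ)^n := by
              rw [he2]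
          _ = (-1:ℝ)^(n+1) * ((-1:ℝ)^(i+1) * (((n+1).choose (i+1) : ℝ)) * ((i+1:ℕ):ℝ)^n) := by
              ring
      rw [Finset.sum_congr rfl hterm, ← Finset.mul_sum]
      have hz : (∑ i ∈ range (n+1),
          (-1:ℝ)^(i+1) * (((n+1).choose (i+1) : ℝ)) * ((i+1:ℕ):ℝ)^n) = 0 := by
        rw [← h0]
      rw [hz, mul_zero]
    have hgval : g (-((n:ℝ)+1)) = 0 := by
      rw [hgdef]
      simp only
      rw [show -((n:ℝ)+1) + ((n:ℝ)+1) = 0 by ring, zero_pow (by omega : n ≠ 0), mul_zero]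
    have hmain : f y = g y := by
      rw [hanchor, hgval, sub_zero] at hconst
      linarith [hconst]
    have hcast : ((n+1:ℕ):ℝ) = (n:ℝ)+1 := by push_cast; ring
    simp only [hcast, Nat.add_sub_cancel]
    exact hmain

lemma keyI (n : ℕ) (hn : 2 ≤ n) (y : ℝ) :
    ∑ k ∈ Icc 1 (n-1), (n.choose k : ℝ) * (k:ℝ)^(k-1) * (y * (y + ((n:ℝ) - k))^(n-k-1))
        + (n:ℝ)^(n-1)
      = (y + n)^(n-1) + ((n:ℝ)-1) * y * (y + n)^(n-2) := by
  have hA := keyA n (by omega) y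
  have hA' := keyA (n-1) (by omega) (y+1)
  have hcast : ((n-1:ℕ):ℝ) = (n:ℝ)-1 := by
    have h1 : 1 ≤ n := by omega
    push_cast [h1]
    ring
  -- split off top term of hA
  have hn1 : n - 1 + 1 = n := by omega
  have hsplit := Finset.sum_Icc_succ_top (show 1 ≤ n-1+1 by omega)
    (fun k => (n.choose k : ℝ) * (k:ℝ)^(k-1) * (y + ((n:ℝ) - k))^(n-k))
  rw [hn1] at hsplit
  rw [hsplit] at hA
  have htop : (n.choose n : ℝ) * (n:ℝ)^(n-1) * (y + ((n:ℝ) - (n:ℝ)))^(n-n) = (n:ℝ)^(n-1) := by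
    simp
  rw [htop] at hA
  -- termwise rewriting
  have hterm : ∀ k ∈ Icc 1 (n-1),
      (n.choose k : ℝ) * (k:ℝ)^(k-1) * (y * (y + ((n:ℝ) - k))^(n-k-1))
      = (n.choose k : ℝ) * (k:ℝ)^(k-1) * (y + ((n:ℝ) - k))^(n-k)
        - (n:ℝ) * (((n-1).choose k : ℝ) * (k:ℝ)^(k-1) * ((y+1) + (((n-1:ℕ):ℝ) - k))^(n-1-k)) := by
    intro k hk
    obtain ⟨hk1, hk2⟩ := Finset.mem_Icc.mp hk
    have hpow : (y + ((n:ℝ) - k))^(n-k) = (y + ((n:ℝ) - k))^(n-k-1) * (y + ((n:ℝ) - k)) := by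
      rw [← pow_succ]
      congr 1
      omega
    have hc : (n:ℝ) * ((n-1).choose k : ℝ) = (n.choose k : ℝ) * ((n-k:ℕ):ℝ) := by
      have h := chooseid (n-1) k hk2
      rw [hn1] at h
      exact_mod_cast congrArg (fun x : ℕ => (x:ℝ)) h
    have hck : ((n-k:ℕ):ℝ) = (n:ℝ) - k := by
      have : k ≤ n := by omega
      push_cast [this]
      ring
    rw [hck] at hc
    have hbase : (y+1) + (((n-1:ℕ):ℝ) - k) = y + ((n:ℝ) - k) := by
      rw [hcast]; ring
    have hexp : n-1-k = n-k-1 := by omega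
    rw [hbase, hexp, hpow]
    linear_combination ((k:ℝ)^(k-1) * (y + ((n:ℝ) - k))^(n-k-1)) * hc
  rw [Finset.sum_congr rfl hterm, Finset.sum_sub_distrib, ← Finset.mul_sum, hA']
  have hb2 : (y + 1 + ((n-1:ℕ):ℝ)) = y + (n:ℝ) := by rw [hcast]; ring
  rw [hb2, hcast]
  have hee : n - 1 - 1 = n - 2 := by omega
  rw [hee]
  have hA2 : ∑ k ∈ Icc 1 (n-1), (n.choose k : ℝ) * (k:ℝ)^(k-1) * (y + ((n:ℝ) - k))^(n-k)
      = (n:ℝ) * (y + (n:ℝ))^(n-1) - (n:ℝ)^(n-1) := by linarith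
  rw [hA2]
  have hps : (y + (n:ℝ))^(n-1) = (y + (n:ℝ))^(n-2) * (y + (n:ℝ)) := by
    rw [← pow_succ]
    congr 1
    omega
  rw [hps]
  ring

set_option maxHeartbeats 1000000 in
theorem abelian_reciprocal_normalizer (N : ℕ) (hN : 2 ≤ N) (α : ℝ) (hα0 : 0 < α) (hα1 : α < 1) :
    ∑ L ∈ Finset.Icc 1 N,
      (N.choose L : ℝ) * (L * α / N) ^ (L - 1) * (1 - L * α / N) ^ ((N : ℤ) - L - 1) =
      (N - (N - 1) * α) / (1 - α) := by
  have hNR : (0:ℝ) < N := by exact_mod_cast (by omega : 0 < N)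
  have hN0 : (N:ℝ) ≠ 0 := ne_of_gt hNR
  have h1α : (0:ℝ) < 1 - α := by linarith
  have h1α' : (1:ℝ) - α ≠ 0 := ne_of_gt h1α
  set y : ℝ := (N:ℝ) * (1 - α) / α with hy
  have hy0 : 0 < y := by positivity
  have hyne : y ≠ 0 := ne_of_gt hy0
  -- split off L = N
  have hn1 : N - 1 + 1 = N := by omega
  have hsplit := Finset.sum_Icc_succ_top (show 1 ≤ N-1+1 by omega)
    (fun L => (N.choose L : ℝ) * ((L:ℝ) * α / N) ^ (L - 1) * (1 - (L:ℝ) * α / N) ^ ((N : ℤ) - L - 1))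
  rw [hn1] at hsplit
  rw [hsplit]
  -- top term
  have htop : (N.choose N : ℝ) * ((N:ℝ) * α / N) ^ (N - 1) * (1 - (N:ℝ) * α / N) ^ ((N : ℤ) - N - 1)
      = α^(N-1) * (1-α)⁻¹ := by
    rw [Nat.choose_self]
    have h1 : (N:ℝ) * α / N = α := by field_simp
    have h2 : ((N:ℤ) - N - 1) = -1 := by ring
    rw [h1, h2, zpow_neg_one]
    push_cast
    ring
  rw [htop]
  -- body terms
  have hbody : ∀ L ∈ Icc 1 (N-1),
      (N.choose L : ℝ) * ((L:ℝ) * α / N) ^ (L - 1) * (1 - (L:ℝ) * α / N) ^ ((N : ℤ) - L - 1)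
      = (α/N)^(N-2)/y * ((N.choose L : ℝ) * (L:ℝ)^(L-1) * (y * (y + ((N:ℝ) - L))^(N-L-1))) := by
    intro L hL
    obtain ⟨hL1, hL2⟩ := Finset.mem_Icc.mp hL
    have hLN : L + 1 ≤ N := by omega
    have hz : ((N:ℤ) - L - 1) = ((N - L - 1 : ℕ) : ℤ) := by omega
    rw [hz, zpow_natCast]
    have h1 : (L:ℝ) * α / N = (α/N) * L := by ring
    have h2 : 1 - (L:ℝ) * α / N = (α/N) * (y + ((N:ℝ) - L)) := by
      rw [hy]
      field_simp
      ring
    rw [h2, h1, mul_pow, mul_pow]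
    rw [show N - 2 = (L-1) + (N-L-1) by omega, pow_add]
    field_simp
  rw [Finset.sum_congr rfl hbody, ← Finset.mul_sum]
  have hI := keyI N hN y
  have hIsum : ∑ L ∈ Icc 1 (N-1), ((N.choose L : ℝ) * (L:ℝ)^(L-1) * (y * (y + ((N:ℝ) - L))^(N-L-1)))
      = (y + N)^(N-1) + ((N:ℝ)-1) * y * (y + N)^(N-2) - (N:ℝ)^(N-1) := by linarith
  rw [hIsum]
  -- final algebra
  have hyN : y + (N:ℝ) = N/α := by
    rw [hy]
    field_simp
    ring
  rw [hyN]
  have e1 : ((N:ℝ)/α)^(N-1) = ((N:ℝ)/α)^(N-2) * ((N:ℝ)/α) := by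
    rw [← pow_succ]; congr 1; omega
  have e2 : (N:ℝ)^(N-1) = (N:ℝ)^(N-2) * (N:ℝ) := by
    rw [← pow_succ]; congr 1; omega
  have e3 : α^(N-1) = α^(N-2) * α := by
    rw [← pow_succ]; congr 1; omega
  have e4 : (α/(N:ℝ))^(N-2) * ((N:ℝ)/α)^(N-2) = 1 := by
    rw [← mul_pow, show (α/(N:ℝ)) * ((N:ℝ)/α) = 1 by field_simp, one_pow]
  have e5 : (α/(N:ℝ))^(N-2) * (N:ℝ)^(N-2) = α^(N-2) := by
    rw [← mul_pow]
    congr 1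
    field_simp
  rw [e1, e2, e3, hy]
  have hNm1 : ((N:ℝ)-1) = ((N-1:ℕ):ℝ) := by
    have h1 : 1 ≤ N := by omega
    push_cast [h1]
    ring
  field_simp
  linear_combination (1 + (1 - α) * ((N:ℝ) - 1)) * e4 - α * e5
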